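/- Fix M > 0. For q ∈ (0,1) and n ∈ ℕ define U_n(q) := Σ_{(r_1,...,r_n)∈ℕ^n} Π_{i=1}^n q(1−q)^{r_i−1} F_M(r_{i−1}, r_i, u_{i−1}) (with r_0 = 0, u_0 = 0, u_i = F_M(r_{i−1}, r_i, u_{i−1})). Then there exists a continuous function μ : (0,1) → ℝ such that for every q ∈ (0,1): q·log(1/q)/(2e^M(1−q)) ≤ μ(q) ≤ q·log(1/q)/(2(e^M−1)(1−q)), and for every n ∈ ℕ: (1 − e^{−M})·μ(q)^n ≤ U_n(q) ≤ μ(q)^n. -/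

import Mathlib

open MeasureTheory ProbabilityTheory Filter Set

noncomputable section

/-- The function `F_M : (ℕ ∪ {0}) × ℕ × [0,1] → [0,1]` of the paper. -/
def FM (M : ℝ) (ℓ r : ℕ) (u : ℝ) : ℝ :=
  if ℓ = 0 then Real.exp (-M) / (2 * (r : ℝ))
  else Real.exp (-M) / (2 * (r : ℝ)) *
    (1 - Real.exp (-M) * (1 - 1 / (2 * (r : ℝ)) - (1 - u) / (2 * (ℓ : ℝ))))⁻¹

/-- The recursion `u₀ = 0`, `u_i = F_M(r_{i-1}, r_i, u_{i-1})` (one takes `r 0 = 0`). -/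
def uSeq (M : ℝ) (r : ℕ → ℕ) : ℕ → ℝ
  | 0 => 0
  | (i + 1) => FM M (r i) (r (i + 1)) (uSeq M r i)

/-- Extend a tuple `(r_1, …, r_n)` of positive integers to a function `ℕ → ℕ`
with value `r_i` at `i ∈ {1, …, n}` and `0` elsewhere (in particular `r 0 = 0`). -/
def ext (n : ℕ) (r : Fin n → ℕ+) (i : ℕ) : ℕ :=
  if h : 1 ≤ i ∧ i ≤ n then (r ⟨i - 1, by omega⟩ : ℕ) else 0

/-- `U_n(q) = Σ_{(r_1,…,r_n)∈ℕ^n} Π_{i=1}^n q(1−q)^{r_i−1} F_M(r_{i−1}, r_i, u_{i−1})`: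
the probability that the killed walk reaches the `n`-th occupied site before the
first return to `0`, when the gaps are i.i.d. geometric(`q`). -/
def U (M q : ℝ) (n : ℕ) : ℝ :=
  ∑' r : Fin n → ℕ+, ∏ i ∈ Finset.Icc 1 n,
    q * (1 - q) ^ (ext n r i - 1) *
      FM M (ext n r (i - 1)) (ext n r i) (uSeq M (ext n r) (i - 1))

namespace URproof


def aa (M : ℝ) (k : ℕ) : ℝ := Real.exp (-M) / (2 * k)
def cc (M : ℝ) : ℝ := 1 - Real.exp (-M)

lemma aa_nonneg (M : ℝ) (k : ℕ) : 0 ≤ aa M k :=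
  div_nonneg (Real.exp_pos _).le (by positivity)

lemma aa_le_half (M : ℝ) (k : ℕ) : aa M k ≤ Real.exp (-M) / 2 := by
  rcases Nat.eq_zero_or_pos k with rfl | hk
  · simp [aa]; positivity
  · rw [aa]
    apply div_le_div_of_nonneg_left (Real.exp_pos _).le two_pos
    have : (1:ℝ) ≤ (k:ℝ) := by exact_mod_cast hk
    linarith

lemma cc_pos (M : ℝ) (hM : 0 < M) : 0 < cc M := by
  have : Real.exp (-M) < Real.exp 0 := Real.exp_lt_exp.mpr (by linarith)
  rw [cc]; simp [Real.exp_zero] at this ⊢; linarith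

lemma cc_lt_one (M : ℝ) : cc M < 1 := by
  have := Real.exp_pos (-M); rw [cc]; linarith

lemma ccaa (M : ℝ) (k k' : ℕ) : cc M + aa M k + aa M k' ≤ 1 := by
  have h1 := aa_le_half M k
  have h2 := aa_le_half M k'
  rw [cc]; linarith

def Dd (M : ℝ) (s : ℕ → ℕ) : ℕ → ℝ
  | 0 => 1
  | 1 => 1
  | (i+2) => (cc M + aa M (s (i+2)) + aa M (s (i+1))) * Dd M s (i+1)
      - (aa M (s (i+1)))^2 * Dd M s i

variable {M : ℝ} {s : ℕ → ℕ}

lemma Dd_zero : Dd M s 0 = 1 := rfl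
lemma Dd_one : Dd M s 1 = 1 := rfl
lemma Dd_two (i : ℕ) : Dd M s (i+2) = (cc M + aa M (s (i+2)) + aa M (s (i+1))) * Dd M s (i+1)
      - (aa M (s (i+1)))^2 * Dd M s i := rfl

lemma Dd_chain (hM : 0 < M) (s : ℕ → ℕ) : ∀ i : ℕ,
    0 < Dd M s i ∧ Dd M s (i+1) ≤ Dd M s i ∧
    (cc M + aa M (s (i+1))) * Dd M s i ≤ Dd M s (i+1) := by
  intro i
  induction i with
  | zero =>
    refine ⟨by norm_num [Dd_zero], by norm_num [Dd_zero, Dd_one], ?_⟩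
    rw [Dd_zero, Dd_one, mul_one]
    have h1 := aa_le_half M (s 1)
    have h2 := Real.exp_pos (-M)
    rw [cc]; linarith
  | succ i IH =>
    obtain ⟨h0, h1, h2⟩ := IH
    have hc := cc_pos M hM
    have hA := aa_nonneg M (s (i+1))
    have hA' := aa_nonneg M (s (i+2))
    have hpos : 0 < Dd M s (i+1) :=
      lt_of_lt_of_le (mul_pos (by linarith) h0) h2
    have hAD : aa M (s (i+1)) * Dd M s i ≤ Dd M s (i+1) := by nlinarith
    refine ⟨hpos, ?_, ?_⟩
    · rw [Dd_two]
      have hcap := ccaa M (s (i+2)) (s (i+1))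
      have h3 := mul_le_mul_of_nonneg_right hcap hpos.le
      nlinarith [mul_nonneg (mul_nonneg hA hA) h0.le]
    · rw [Dd_two]
      have h4 := mul_le_mul_of_nonneg_left hAD hA
      nlinarith
  
lemma Dd_pos (hM : 0 < M) (i : ℕ) : 0 < Dd M s i := (Dd_chain hM s i).1

lemma Dd_le (hM : 0 < M) (i : ℕ) : Dd M s (i+1) ≤ Dd M s i := (Dd_chain hM s i).2.1

lemma Dd_low (hM : 0 < M) (i : ℕ) :
    (cc M + aa M (s (i+1))) * Dd M s i ≤ Dd M s (i+1) := (Dd_chain hM s i).2.2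

lemma Dd_aa (hM : 0 < M) (i : ℕ) :
    aa M (s (i+1)) * Dd M s i ≤ Dd M s (i+1) := by
  have h := Dd_low (s := s) hM i
  have := mul_nonneg (cc_pos M hM).le (Dd_pos (s := s) hM i).le
  nlinarith

lemma Dd_congr (M : ℝ) : ∀ (i : ℕ) (s t : ℕ → ℕ),
    (∀ j, 1 ≤ j → j ≤ i → s j = t j) → Dd M s i = Dd M t i
  | 0, s, t, _ => rfl
  | 1, s, t, _ => rfl
  | (i+2), s, t, h => by
    rw [Dd_two, Dd_two, Dd_congr M (i+1) s t (fun j hj hj' => h j hj (by omega)),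
      Dd_congr M i s t (fun j hj hj' => h j hj (by omega)),
      h (i+2) (by omega) le_rfl, h (i+1) (by omega) (by omega)]


variable {M : ℝ} {s : ℕ → ℕ}

lemma Dd_pos' (M : ℝ) (s : ℕ → ℕ) (hM : 0 < M) (i : ℕ) : 0 < Dd M s i :=
  Dd_pos (s := s) hM i
lemma Dd_aa' (M : ℝ) (s : ℕ → ℕ) (hM : 0 < M) (i : ℕ) :
    aa M (s (i+1)) * Dd M s i ≤ Dd M s (i+1) := Dd_aa (s := s) hM i
lemma Dd_le' (M : ℝ) (s : ℕ → ℕ) (hM : 0 < M) (i : ℕ) : Dd M s (i+1) ≤ Dd M s i :=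
  Dd_le (s := s) hM i
lemma Dd_low' (M : ℝ) (s : ℕ → ℕ) (hM : 0 < M) (i : ℕ) :
    (cc M + aa M (s (i+1))) * Dd M s i ≤ Dd M s (i+1) := Dd_low (s := s) hM i

lemma uSeq_eq (hM : 0 < M) (n : ℕ) (hs0 : s 0 = 0)
    (hs : ∀ i, 1 ≤ i → i ≤ n → 1 ≤ s i) :
    ∀ j, j + 1 ≤ n → uSeq M s (j+1) = aa M (s (j+1)) * Dd M s j / Dd M s (j+1) := by
  intro j
  induction j with
  | zero =>
    intro _
    show FM M (s 0) (s 1) (uSeq M s 0) = _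
    rw [hs0]
    show FM M 0 (s 1) 0 = _
    simp [FM, aa, Dd_zero, Dd_one]
  | succ j IH =>
    intro h
    have hj1 : j + 1 ≤ n := by omega
    have hu := IH hj1
    have hs1 : 1 ≤ s (j+1) := hs _ (by omega) hj1
    have hs2 : 1 ≤ s (j+2) := hs _ (by omega) h
    have hD0 : (0:ℝ) < Dd M s j := Dd_pos' M s hM j
    have hD1 : (0:ℝ) < Dd M s (j+1) := Dd_pos' M s hM (j+1)
    have hD2 : (0:ℝ) < Dd M s (j+2) := Dd_pos' M s hM (j+2)
    have hx : (0:ℝ) < ((s (j+1) : ℕ) : ℝ) := by exact_mod_cast hs1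
    have hy : (0:ℝ) < ((s (j+2) : ℕ) : ℝ) := by exact_mod_cast hs2
    show FM M (s (j+1)) (s (j+2)) (uSeq M s (j+1)) = _
    rw [hu]
    have hne : ¬ (s (j+1) = 0) := by omega
    simp only [FM, if_neg hne]
    have hkey : (1 - Real.exp (-M) * (1 - 1/(2*((s (j+2):ℕ):ℝ))
        - (1 - aa M (s (j+1)) * Dd M s j / Dd M s (j+1))/(2*((s (j+1):ℕ):ℝ))))
        = Dd M s (j+2) / Dd M s (j+1) := by
      rw [Dd_two]
      simp only [aa, cc]
      field_simp
      ring
    rw [hkey, aa]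
    field_simp

lemma uSeq_bounds (hM : 0 < M) (n : ℕ) (hs0 : s 0 = 0)
    (hs : ∀ i, 1 ≤ i → i ≤ n → 1 ≤ s i) :
    ∀ j, j ≤ n → 0 ≤ uSeq M s j ∧ uSeq M s j ≤ 1 := by
  intro j hj
  rcases j with _ | j
  · exact ⟨le_refl 0, zero_le_one⟩
  · rw [uSeq_eq hM n hs0 hs j hj]
    have hD0 : (0:ℝ) < Dd M s j := Dd_pos' M s hM j
    have hD1 : (0:ℝ) < Dd M s (j+1) := Dd_pos' M s hM (j+1)
    constructor
    · exact div_nonneg (mul_nonneg (aa_nonneg M _) hD0.le) hD1.le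
    · rw [div_le_one hD1]
      simpa using Dd_aa' M s hM j

lemma prod_uSeq (hM : 0 < M) (n : ℕ) (hs0 : s 0 = 0)
    (hs : ∀ i, 1 ≤ i → i ≤ n → 1 ≤ s i) :
    ∏ i ∈ Finset.Icc 1 n, uSeq M s i
      = (∏ i ∈ Finset.Icc 1 n, aa M (s i)) / Dd M s n := by
  induction n with
  | zero => simp [Dd_zero]
  | succ n IH =>
    have hs' : ∀ i, 1 ≤ i → i ≤ n → 1 ≤ s i := fun i h1 h2 => hs i h1 (by omega)
    rw [Finset.prod_Icc_succ_top (by omega), Finset.prod_Icc_succ_top (by omega),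
      IH hs', uSeq_eq hM (n+1) hs0 hs n le_rfl]
    have hD0 : (0:ℝ) < Dd M s n := Dd_pos' M s hM n
    have hD1 : (0:ℝ) < Dd M s (n+1) := Dd_pos' M s hM (n+1)
    field_simp

-- ext lemmas
lemma ext_zero' (n : ℕ) (r : Fin n → ℕ+) : ext n r 0 = 0 := by
  rw [_root_.ext, dif_neg]; omega

lemma ext_app {n : ℕ} (r : Fin n → ℕ+) {i : ℕ} (h1 : 1 ≤ i) (h2 : i ≤ n) :
    ext n r i = (r ⟨i - 1, by omega⟩ : ℕ) := dif_pos ⟨h1, h2⟩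

lemma ext_valid (n : ℕ) (r : Fin n → ℕ+) : ∀ i, 1 ≤ i → i ≤ n → 1 ≤ ext n r i := by
  intro i h1 h2
  rw [ext_app r h1 h2]
  exact (r _).pos

lemma FM_factor {i : ℕ} (h1 : 1 ≤ i) (s : ℕ → ℕ) :
    FM M (s (i-1)) (s i) (uSeq M s (i-1)) = uSeq M s i := by
  obtain ⟨j, rfl⟩ := Nat.exists_eq_add_of_le h1
  have h : 1 + j - 1 = j := by omega
  have h2 : 1 + j = j + 1 := by omega
  rw [h, h2]
  rfl

lemma prod_Icc_comp (f : ℕ → ℝ) (n : ℕ) (r : Fin n → ℕ+) :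
    ∏ i ∈ Finset.Icc 1 n, f (ext n r i) = ∏ i : Fin n, f ((r i : ℕ)) := by
  rw [← Finset.Ico_add_one_right_eq_Icc, Finset.prod_Ico_eq_prod_range]
  rw [show n+1-1 = n from rfl]
  rw [← Fin.prod_univ_eq_prod_range (fun k => f (ext n r (1 + k))) n]
  apply Finset.prod_congr rfl
  intro i _
  rw [ext_app r (by omega) (by have := i.isLt; omega : 1 + (i:ℕ) ≤ n)]
  congr 2
  exact congrArg r (Fin.ext (show 1 + (i:ℕ) - 1 = (i:ℕ) by omega))


def term (M q : ℝ) (n : ℕ) (r : Fin n → ℕ+) : ℝ :=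
  ∏ i ∈ Finset.Icc 1 n, (q * (1 - q) ^ (ext n r i - 1) *
      FM M (ext n r (i - 1)) (ext n r i) (uSeq M (ext n r) (i - 1)))

lemma U_eq (M q : ℝ) (n : ℕ) : U M q n = ∑' r, term M q n r := rfl

lemma term_eq₁ (M q : ℝ) (n : ℕ) (r : Fin n → ℕ+) : term M q n r =
    (∏ i ∈ Finset.Icc 1 n, (q * (1-q)^(ext n r i - 1))) *
      ∏ i ∈ Finset.Icc 1 n, uSeq M (ext n r) i := by
  rw [term, ← Finset.prod_mul_distrib]
  refine Finset.prod_congr rfl fun i hi => ?_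
  rw [FM_factor (Finset.mem_Icc.mp hi).1]

lemma term_eq₂ (hM : 0 < M) (q : ℝ) (n : ℕ) (r : Fin n → ℕ+) : term M q n r =
    (∏ i ∈ Finset.Icc 1 n, (q * (1-q)^(ext n r i - 1))) *
      ((∏ i ∈ Finset.Icc 1 n, aa M (ext n r i)) / Dd M (ext n r) n) := by
  rw [term_eq₁, prod_uSeq hM n (ext_zero' n r) (ext_valid n r)]

lemma term_nonneg (hM : 0 < M) {q : ℝ} (hq0 : 0 ≤ q) (hq1 : q ≤ 1) (n : ℕ)
    (r : Fin n → ℕ+) : 0 ≤ term M q n r := by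
  rw [term_eq₁]
  refine mul_nonneg (Finset.prod_nonneg fun i _ =>
      mul_nonneg hq0 (pow_nonneg (by linarith) _))
    (Finset.prod_nonneg fun i hi =>
      (uSeq_bounds hM n (ext_zero' n r) (ext_valid n r) i (Finset.mem_Icc.mp hi).2).1)

lemma term_le (hM : 0 < M) {q : ℝ} (hq0 : 0 ≤ q) (hq1 : q ≤ 1) (n : ℕ)
    (r : Fin n → ℕ+) : term M q n r ≤ ∏ i : Fin n, (q * (1-q)^((r i : ℕ)-1)) := by
  have h2 : ∏ i ∈ Finset.Icc 1 n, (q * (1-q)^(ext n r i - 1))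
      = ∏ i : Fin n, (q * (1-q)^((r i:ℕ)-1)) :=
    prod_Icc_comp (fun k => q * (1-q)^(k-1)) n r
  calc term M q n r = _ * _ := term_eq₁ M q n r
    _ ≤ (∏ i ∈ Finset.Icc 1 n, (q * (1-q)^(ext n r i - 1))) * 1 := by
        apply mul_le_mul_of_nonneg_left
        swap
        · exact Finset.prod_nonneg fun i _ => mul_nonneg hq0 (pow_nonneg (by linarith) _)
        · exact Finset.prod_le_one
            (fun i hi => (uSeq_bounds hM n (ext_zero' n r) (ext_valid n r) i
              (Finset.mem_Icc.mp hi).2).1)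
            (fun i hi => (uSeq_bounds hM n (ext_zero' n r) (ext_valid n r) i
              (Finset.mem_Icc.mp hi).2).2)
    _ = _ := by rw [mul_one]; exact h2

def consE (n : ℕ) : ℕ+ × (Fin n → ℕ+) ≃ (Fin (n+1) → ℕ+) := Fin.consEquiv fun _ => ℕ+

lemma summable_pi {g : ℕ+ → ℝ} (hg0 : ∀ k, 0 ≤ g k) (hg : Summable g) :
    ∀ n : ℕ, Summable (fun r : Fin n → ℕ+ => ∏ i, g (r i)) := by
  intro n
  induction n with
  | zero =>
    exact ⟨_, hasSum_single (fun i => i.elim0) (fun b' hb' =>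
      absurd (funext fun i => i.elim0) hb')⟩
  | succ n IH =>
    apply ((consE n).summable_iff).mp
    have hcomp : ((fun r : Fin (n+1) → ℕ+ => ∏ i, g (r i)) ∘ (consE n))
        = fun p : ℕ+ × (Fin n → ℕ+) => g p.1 * ∏ i, g (p.2 i) := by
      funext p
      simp [consE, Fin.prod_univ_succ]
    rw [hcomp]
    exact @Summable.mul_of_nonneg ℕ+ (Fin n → ℕ+) g (fun r => ∏ i, g (r i)) hg IH
      (fun k => hg0 k) (fun p => Finset.prod_nonneg fun i _ => hg0 _)


lemma summable_gpow {x : ℝ} (h0 : 0 ≤ x) (h1 : x < 1) :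
    Summable (fun k : ℕ+ => x ^ ((k:ℕ)-1)) := by
  apply (Equiv.pnatEquivNat.symm.summable_iff).mp
  have hcomp : ((fun k : ℕ+ => x ^ ((k:ℕ)-1)) ∘ Equiv.pnatEquivNat.symm)
      = fun j : ℕ => x ^ j := by
    funext j
    simp [Nat.succPNat]
  rw [hcomp]
  exact summable_geometric_of_lt_one h0 h1

lemma summable_term (hM : 0 < M) {q : ℝ} (hq : q ∈ Set.Ioo (0:ℝ) 1) (n : ℕ) :
    Summable (term M q n) := by
  have hs : Summable (fun k : ℕ+ => q * (1-q)^((k:ℕ)-1)) :=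
    (summable_gpow (by linarith [hq.2]) (by linarith [hq.1])).mul_left q
  exact Summable.of_nonneg_of_le (fun r => term_nonneg hM hq.1.le hq.2.le n r)
    (fun r => term_le hM hq.1.le hq.2.le n r)
    (summable_pi (fun k => mul_nonneg hq.1.le (pow_nonneg (by linarith [hq.2]) _)) hs n)

lemma term_one (M q : ℝ) (r : Fin 1 → ℕ+) :
    term M q 1 r = q * (1-q)^((r 0 : ℕ)-1) * (Real.exp (-M)/(2*((r 0 : ℕ):ℝ))) := by
  rw [term, Finset.Icc_self, Finset.prod_singleton]
  have h0 : ext 1 r 0 = 0 := ext_zero' 1 r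
  have h1 : ext 1 r 1 = (r 0 : ℕ) := by
    rw [ext_app r le_rfl le_rfl]
    exact congrArg _ (congrArg r (Fin.ext (by norm_num)))
  rw [show (1:ℕ) - 1 = 0 from rfl, h0, h1]
  show _ * FM M 0 _ 0 = _
  simp [FM]

lemma U_one (hM : 0 < M) {q : ℝ} (hq : q ∈ Set.Ioo (0:ℝ) 1) :
    U M q 1 = Real.exp (-M) * (q * (-Real.log q) / (2*(1-q))) := by
  have h1q : (0:ℝ) < 1 - q := by linarith [hq.2]
  have habs : |1 - q| < 1 := by rw [abs_lt]; constructor <;> [linarith [hq.2]; linarith [hq.1]]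
  have base := Real.hasSum_pow_div_log_of_abs_lt_one habs
  rw [show (1:ℝ) - (1-q) = q by ring] at base
  have base2 := base.mul_left (Real.exp (-M) * q / (2*(1-q)))
  have hfun : (fun j : ℕ => Real.exp (-M) * q / (2*(1-q)) * ((1-q)^(j+1)/((j:ℝ)+1)))
      = fun j : ℕ => q * (1-q)^j * (Real.exp (-M) / (2*((j:ℝ)+1))) := by
    funext j
    rw [pow_succ]
    field_simp
  rw [hfun] at base2
  rw [U_eq]
  rw [← ((Equiv.funUnique (Fin 1) ℕ+).symm.tsum_eq (term M q 1))]
  have hterm : ∀ k : ℕ+, term M q 1 ((Equiv.funUnique (Fin 1) ℕ+).symm k)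
      = q * (1-q)^((k:ℕ)-1) * (Real.exp (-M)/(2*((k:ℕ):ℝ))) := by
    intro k
    rw [term_one]
    rfl
  rw [tsum_congr hterm]
  rw [← (Equiv.pnatEquivNat.symm.tsum_eq (fun k : ℕ+ => q * (1-q)^((k:ℕ)-1) * (Real.exp (-M)/(2*((k:ℕ):ℝ)))))]
  have hterm2 : (fun j : ℕ => q * (1-q)^(((Equiv.pnatEquivNat.symm j : ℕ+):ℕ)-1)
      * (Real.exp (-M)/(2*(((Equiv.pnatEquivNat.symm j : ℕ+):ℕ):ℝ))))
      = fun j : ℕ => q * (1-q)^j * (Real.exp (-M) / (2*((j:ℝ)+1))) := by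
    funext j
    have : ((Equiv.pnatEquivNat.symm j : ℕ+) : ℕ) = j + 1 := by
      simp [Nat.succPNat]
    rw [this]
    push_cast
    ring_nf
  rw [tsum_congr (fun j => congrFun hterm2 j)]
  rw [base2.tsum_eq]
  field_simp


lemma recP (c' : ℝ) (hc : 0 ≤ c') (a' : ℕ → ℝ) (ha : ∀ j, 0 ≤ a' j) (w : ℕ → ℝ) (m : ℕ)
    (hrec : ∀ j, 1 ≤ j → j + 1 ≤ m →
      w (j+1) = (c' + a' (j+1) + a' j) * w j - (a' j)^2 * w (j-1))
    (h0 : 0 ≤ w 0) (h1 : a' 1 * w 0 ≤ w 1) :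
    ∀ j, j ≤ m → 0 ≤ w j ∧ (1 ≤ j → a' j * w (j-1) ≤ w j) := by
  intro j
  induction j with
  | zero => exact fun _ => ⟨h0, by omega⟩
  | succ j IH =>
    intro hjm
    rcases Nat.eq_zero_or_pos j with rfl | hj
    · refine ⟨le_trans (mul_nonneg (ha 1) h0) h1, fun _ => ?_⟩
      simpa using h1
    · obtain ⟨h0j, h2⟩ := IH (by omega)
      have h3 := h2 hj
      have heq := hrec j hj hjm
      have h4 : a' j ^ 2 * w (j-1) ≤ a' j * w j := by
        have := mul_le_mul_of_nonneg_left h3 (ha j)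
        nlinarith
      refine ⟨?_, fun _ => ?_⟩
      · nlinarith [ha (j+1), mul_nonneg (ha (j+1)) h0j, mul_nonneg hc h0j]
      · rw [Nat.add_sub_cancel]
        nlinarith [mul_nonneg hc h0j]

lemma Dd_split (hM : 0 < M) {n m : ℕ} (hn : 1 ≤ n) (s sy : ℕ → ℕ)
    (hsy : ∀ j, 1 ≤ j → j ≤ m → sy j = s (n+j)) :
    cc M * (Dd M sy m * Dd M s n) ≤ Dd M s (n+m) ∧
      Dd M s (n+m) ≤ Dd M sy m * Dd M s n := by
  have hDn : (0:ℝ) < Dd M s n := Dd_pos' M s hM n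
  have hcc := cc_pos M hM
  have hccle : cc M < 1 := by
    have := Real.exp_pos (-M); rw [cc]; linarith
  have hDle : Dd M s (n+1) ≤ Dd M s n := Dd_le' M s hM n
  have hDlow : (cc M + aa M (s (n+1))) * Dd M s n ≤ Dd M s (n+1) := Dd_low' M s hM n
  have hrecS : ∀ j, 1 ≤ j → Dd M s (n+(j+1))
      = (cc M + aa M (s (n+(j+1))) + aa M (s (n+j))) * Dd M s (n+j)
        - (aa M (s (n+j)))^2 * Dd M s (n+(j-1)) := by
    intro j hj
    obtain ⟨k, hk⟩ : ∃ k, n + j = k + 1 := ⟨n+j-1, by omega⟩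
    have h2 : n + (j + 1) = k + 2 := by omega
    rw [h2, Dd_two]
    have e1 : k + 2 = n + (j+1) := by omega
    have e2 : k + 1 = n + j := by omega
    have e3 : k = n + (j-1) := by omega
    rw [e1, e2, e3]
  have hrecY : ∀ j, 1 ≤ j → j + 1 ≤ m → Dd M sy (j+1)
      = (cc M + aa M (s (n+(j+1))) + aa M (s (n+j))) * Dd M sy j
        - (aa M (s (n+j)))^2 * Dd M sy (j-1) := by
    intro j hj hjm
    obtain ⟨k, hk⟩ : ∃ k, j = k + 1 := ⟨j-1, by omega⟩
    subst hk
    rw [Dd_two]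
    rw [hsy (k+2) (by omega) (by omega), hsy (k+1) (by omega) (by omega)]
    have e3 : k + 1 - 1 = k := by omega
    rw [e3]
  constructor
  · -- lower bound, via wW
    have hW := recP (cc M) hcc.le (fun j => aa M (s (n+j))) (fun j => aa_nonneg M _)
      (fun j => Dd M s (n+j) - cc M * (Dd M sy j * Dd M s n)) m
      (by
        intro j hj hjm
        show Dd M s (n+(j+1)) - cc M * (Dd M sy (j+1) * Dd M s n)
          = _ * (Dd M s (n+j) - cc M * (Dd M sy j * Dd M s n))
            - _ * (Dd M s (n+(j-1)) - cc M * (Dd M sy (j-1) * Dd M s n))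
        rw [hrecY j hj hjm, hrecS j hj]
        ring)
      (by
        show (0:ℝ) ≤ Dd M s (n+0) - cc M * (Dd M sy 0 * Dd M s n)
        simp only [Nat.add_zero, Dd_zero, one_mul]
        nlinarith)
      (by
        show aa M (s (n+1)) * (Dd M s (n+0) - cc M * (Dd M sy 0 * Dd M s n))
          ≤ Dd M s (n+1) - cc M * (Dd M sy 1 * Dd M s n)
        simp only [Nat.add_zero, Dd_zero, Dd_one, one_mul]
        have hA := aa_nonneg M (s (n+1))
        nlinarith [mul_nonneg (mul_nonneg hA hcc.le) hDn.le])
    have h := (hW m le_rfl).1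
    linarith
  · -- upper bound, via wZ
    have hZ := recP (cc M) hcc.le (fun j => aa M (s (n+j))) (fun j => aa_nonneg M _)
      (fun j => Dd M sy j * Dd M s n - Dd M s (n+j)) m
      (by
        intro j hj hjm
        show Dd M sy (j+1) * Dd M s n - Dd M s (n+(j+1))
          = _ * (Dd M sy j * Dd M s n - Dd M s (n+j))
            - _ * (Dd M sy (j-1) * Dd M s n - Dd M s (n+(j-1)))
        rw [hrecY j hj hjm, hrecS j hj]
        ring)
      (by
        show (0:ℝ) ≤ Dd M sy 0 * Dd M s n - Dd M s (n+0)
        simp only [Nat.add_zero, Dd_zero, one_mul, sub_self, le_refl])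
      (by
        show aa M (s (n+1)) * (Dd M sy 0 * Dd M s n - Dd M s (n+0))
          ≤ Dd M sy 1 * Dd M s n - Dd M s (n+1)
        simp only [Nat.add_zero, Dd_zero, Dd_one, one_mul, sub_self, mul_zero]
        linarith)
    have h := (hZ m le_rfl).1
    linarith


def appendE (n m : ℕ) : (Fin n → ℕ+) × (Fin m → ℕ+) ≃ (Fin (n+m) → ℕ+) where
  toFun p := Fin.append p.1 p.2
  invFun t := (fun i => t (Fin.castAdd m i), fun j => t (Fin.natAdd n j))
  left_inv p := by
    refine Prod.ext ?_ ?_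
    · funext i; exact Fin.append_left _ _ i
    · funext j; exact Fin.append_right _ _ j
  right_inv t := by
    funext k
    refine Fin.addCases (fun i => ?_) (fun j => ?_) k
    · exact Fin.append_left _ _ i
    · exact Fin.append_right _ _ j

lemma ext_append_left {n m : ℕ} (x : Fin n → ℕ+) (y : Fin m → ℕ+) {i : ℕ} (h : i ≤ n) :
    ext (n+m) (Fin.append x y) i = ext n x i := by
  rcases Nat.eq_zero_or_pos i with rfl | h1
  · rw [ext_zero', ext_zero']
  · rw [ext_app _ h1 (by omega), ext_app x h1 h]
    have e : (⟨i-1, by omega⟩ : Fin (n+m)) = Fin.castAdd m ⟨i-1, by omega⟩ := rfl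
    rw [e, Fin.append_left]

lemma ext_append_right {n m : ℕ} (x : Fin n → ℕ+) (y : Fin m → ℕ+) {j : ℕ}
    (h1 : 1 ≤ j) (h2 : j ≤ m) :
    ext (n+m) (Fin.append x y) (n+j) = ext m y j := by
  rw [ext_app _ (by omega) (by omega), ext_app y h1 h2]
  have e : (⟨n+j-1, by omega⟩ : Fin (n+m)) = Fin.natAdd n ⟨j-1, by omega⟩ :=
    Fin.ext (show n+j-1 = n+(j-1) by omega)
  rw [e, Fin.append_right]

lemma prod_Icc_split (f : ℕ → ℝ) (n m : ℕ) (x : Fin n → ℕ+) (y : Fin m → ℕ+) :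
    ∏ i ∈ Finset.Icc 1 (n+m), f (ext (n+m) (Fin.append x y) i)
      = (∏ i ∈ Finset.Icc 1 n, f (ext n x i)) * ∏ i ∈ Finset.Icc 1 m, f (ext m y i) := by
  rw [prod_Icc_comp f (n+m), prod_Icc_comp f n, prod_Icc_comp f m, Fin.prod_univ_add]
  congr 1
  · exact Finset.prod_congr rfl fun i _ => by rw [Fin.append_left]
  · exact Finset.prod_congr rfl fun i _ => by rw [Fin.append_right]

lemma term_split (hM : 0 < M) {q : ℝ} (hq : q ∈ Set.Ioo (0:ℝ) 1) {n m : ℕ}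
    (hn : 1 ≤ n) (hm : 1 ≤ m) (x : Fin n → ℕ+) (y : Fin m → ℕ+) :
    term M q n x * term M q m y ≤ term M q (n+m) (Fin.append x y) ∧
      term M q (n+m) (Fin.append x y) ≤ (term M q n x * term M q m y) / cc M := by
  have hq0 := hq.1.le
  have hq1 := hq.2.le
  have hcc := cc_pos M hM
  set s := ext (n+m) (Fin.append x y) with hs
  have hsx : ∀ i, 1 ≤ i → i ≤ n → s i = ext n x i := fun i _ h2 => ext_append_left x y h2
  have hsy : ∀ j, 1 ≤ j → j ≤ m → ext m y j = s (n+j) :=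
    fun j h1 h2 => (ext_append_right x y h1 h2).symm
  have hDx : Dd M s n = Dd M (ext n x) n := Dd_congr M n _ _ hsx
  obtain ⟨hlow, hup⟩ := Dd_split hM hn s (ext m y) hsy
  have hDxpos : (0:ℝ) < Dd M (ext n x) n := Dd_pos' M _ hM n
  have hDypos : (0:ℝ) < Dd M (ext m y) m := Dd_pos' M _ hM m
  have hDpos : (0:ℝ) < Dd M s (n+m) := Dd_pos' M _ hM (n+m)
  -- numerators
  set Px := (∏ i ∈ Finset.Icc 1 n, (q * (1-q)^(ext n x i - 1))) *
      ∏ i ∈ Finset.Icc 1 n, aa M (ext n x i) with hPx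
  set Py := (∏ i ∈ Finset.Icc 1 m, (q * (1-q)^(ext m y i - 1))) *
      ∏ i ∈ Finset.Icc 1 m, aa M (ext m y i) with hPy
  have hPxnn : 0 ≤ Px := mul_nonneg
    (Finset.prod_nonneg fun i _ => mul_nonneg hq0 (pow_nonneg (by linarith) _))
    (Finset.prod_nonneg fun i _ => aa_nonneg M _)
  have hPynn : 0 ≤ Py := mul_nonneg
    (Finset.prod_nonneg fun i _ => mul_nonneg hq0 (pow_nonneg (by linarith) _))
    (Finset.prod_nonneg fun i _ => aa_nonneg M _)
  have htx : term M q n x = Px / Dd M (ext n x) n := by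
    rw [term_eq₂ hM, hPx, mul_div_assoc]
  have hty : term M q m y = Py / Dd M (ext m y) m := by
    rw [term_eq₂ hM, hPy, mul_div_assoc]
  have htxy : term M q (n+m) (Fin.append x y) = (Px * Py) / Dd M s (n+m) := by
    rw [term_eq₂ hM, ← mul_div_assoc]
    congr 1
    have e1 : ∏ i ∈ Finset.Icc 1 (n+m), (q * (1-q)^(ext (n+m) (Fin.append x y) i - 1))
        = (∏ i ∈ Finset.Icc 1 n, (q * (1-q)^(ext n x i - 1))) *
          ∏ i ∈ Finset.Icc 1 m, (q * (1-q)^(ext m y i - 1)) :=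
      prod_Icc_split (fun k => q * (1-q)^(k-1)) n m x y
    have e2 : ∏ i ∈ Finset.Icc 1 (n+m), aa M (ext (n+m) (Fin.append x y) i)
        = (∏ i ∈ Finset.Icc 1 n, aa M (ext n x i)) *
          ∏ i ∈ Finset.Icc 1 m, aa M (ext m y i) :=
      prod_Icc_split (aa M) n m x y
    rw [e1, e2, hPx, hPy]
    ring
  have hmulterms : term M q n x * term M q m y = (Px * Py) / (Dd M (ext n x) n * Dd M (ext m y) m) := by
    rw [htx, hty, div_mul_div_comm]
  constructor
  · rw [hmulterms, htxy]
    apply div_le_div_of_nonneg_left (mul_nonneg hPxnn hPynn) hDpos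
    rw [hDx] at hup
    calc Dd M s (n+m) ≤ Dd M (ext m y) m * Dd M (ext n x) n := hup
      _ = Dd M (ext n x) n * Dd M (ext m y) m := mul_comm _ _
  · rw [hmulterms, htxy]
    have h1 : (Px * Py) / Dd M s (n+m) ≤ (Px * Py) / (cc M * (Dd M (ext m y) m * Dd M (ext n x) n)) := by
      apply div_le_div_of_nonneg_left (mul_nonneg hPxnn hPynn)
      · positivity
      · rw [hDx] at hlow; exact hlow
    calc (Px * Py) / Dd M s (n+m)
        ≤ (Px * Py) / (cc M * (Dd M (ext m y) m * Dd M (ext n x) n)) := h1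
      _ = (Px * Py) / (Dd M (ext n x) n * Dd M (ext m y) m) / cc M := by
          rw [div_div]; ring_nf
  
lemma U_split (hM : 0 < M) {q : ℝ} (hq : q ∈ Set.Ioo (0:ℝ) 1) {n m : ℕ}
    (hn : 1 ≤ n) (hm : 1 ≤ m) :
    U M q n * U M q m ≤ U M q (n+m) ∧
      U M q (n+m) ≤ (U M q n * U M q m) / cc M := by
  have hsn := summable_term hM hq n
  have hsm := summable_term hM hq m
  have hsnm := summable_term hM hq (n+m)
  have hE : Summable ((term M q (n+m)) ∘ (appendE n m)) :=
    ((appendE n m).summable_iff).mpr hsnm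
  have hprod : Summable (fun p : (Fin n → ℕ+) × (Fin m → ℕ+) =>
      term M q n p.1 * term M q m p.2) :=
    @Summable.mul_of_nonneg _ _ (term M q n) (term M q m) hsn hsm
      (fun r => term_nonneg hM hq.1.le hq.2.le n r)
      (fun r => term_nonneg hM hq.1.le hq.2.le m r)
  have hUnm : U M q (n+m) = ∑' p, term M q (n+m) ((appendE n m) p) := by
    rw [U_eq, ← (appendE n m).tsum_eq (term M q (n+m))]
  have hnorm : ∀ (k : ℕ), Summable (fun x : Fin k → ℕ+ => ‖term M q k x‖) := by
    intro k
    have : (fun x : Fin k → ℕ+ => ‖term M q k x‖) = term M q k := by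
      funext x
      rw [Real.norm_eq_abs, abs_of_nonneg (term_nonneg hM hq.1.le hq.2.le k x)]
    rw [this]
    exact summable_term hM hq k
  have hmul : ∑' p : (Fin n → ℕ+) × (Fin m → ℕ+), term M q n p.1 * term M q m p.2
      = U M q n * U M q m := by
    rw [U_eq, U_eq]
    exact (tsum_mul_tsum_of_summable_norm (hnorm n) (hnorm m)).symm
  constructor
  · rw [hUnm, ← hmul]
    exact Summable.tsum_le_tsum (fun p => (term_split hM hq hn hm p.1 p.2).1) hprod hE
  · rw [hUnm, ← hmul]
    calc ∑' p, term M q (n+m) ((appendE n m) p)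
        ≤ ∑' p : (Fin n → ℕ+) × (Fin m → ℕ+),
            (term M q n p.1 * term M q m p.2) / cc M :=
          Summable.tsum_le_tsum (fun p => (term_split hM hq hn hm p.1 p.2).2) hE
            (hprod.div_const _)
      _ = (∑' p : (Fin n → ℕ+) × (Fin m → ℕ+),
            term M q n p.1 * term M q m p.2) / cc M := by
          simp only [div_eq_mul_inv]
          exact tsum_mul_right
  

lemma U_pos (hM : 0 < M) {q : ℝ} (hq : q ∈ Set.Ioo (0:ℝ) 1) :
    ∀ n, 1 ≤ n → 0 < U M q n := by
  have h1 : 0 < U M q 1 := by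
    rw [U_one hM hq]
    have hlog : 0 < -Real.log q := neg_pos.mpr (Real.log_neg hq.1 hq.2)
    have := Real.exp_pos (-M)
    apply mul_pos this
    apply div_pos (mul_pos hq.1 hlog)
    have := hq.2; linarith
  intro n hn
  induction n with
  | zero => omega
  | succ n IH =>
    rcases Nat.eq_zero_or_pos n with rfl | hn'
    · exact h1
    · exact lt_of_lt_of_le (mul_pos (IH hn') h1) (U_split hM hq hn' le_rfl).1

lemma U_pow_le (hM : 0 < M) {q : ℝ} (hq : q ∈ Set.Ioo (0:ℝ) 1) :
    ∀ n k, 1 ≤ n → 1 ≤ k → U M q n ^ k ≤ U M q (n*k) := by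
  intro n k hn
  induction k with
  | zero => omega
  | succ k IH =>
    intro _
    rcases Nat.eq_zero_or_pos k with rfl | hk'
    · simp
    · have h1 : U M q n ^ (k+1) = U M q n ^ k * U M q n := pow_succ _ _
      have h2 : U M q n ^ k ≤ U M q (n*k) := IH hk'
      have h3 : U M q (n*k) * U M q n ≤ U M q (n*k + n) :=
        (U_split hM hq (by exact Nat.one_le_iff_ne_zero.mpr (by positivity)) hn).1
      have h4 : n * (k+1) = n*k + n := by ring
      rw [h4, h1]
      calc U M q n ^ k * U M q n ≤ U M q (n*k) * U M q n :=
            mul_le_mul_of_nonneg_right h2 (U_pos hM hq n hn).le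
        _ ≤ U M q (n*k + n) := h3

lemma U_le_pow_div (hM : 0 < M) {q : ℝ} (hq : q ∈ Set.Ioo (0:ℝ) 1) :
    ∀ n k, 1 ≤ n → 1 ≤ k → U M q (k*n) ≤ U M q k ^ n / cc M ^ n := by
  have hcc := cc_pos M hM
  have hcc1 := cc_lt_one M
  intro n k hn hk
  induction n with
  | zero => omega
  | succ n IH =>
    rcases Nat.eq_zero_or_pos n with rfl | hn'
    · norm_num
      rw [le_div_iff₀ hcc]
      nlinarith [U_pos hM hq k hk]
    · have h2 : k*(n+1) = k*n + k := by ring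
      have h3 : U M q (k*n + k) ≤ (U M q (k*n) * U M q k) / cc M :=
        (U_split hM hq (by exact Nat.one_le_iff_ne_zero.mpr (by positivity)) hk).2
      have h4 : U M q (k*n) * U M q k ≤ (U M q k ^ n / cc M ^ n) * U M q k :=
        mul_le_mul_of_nonneg_right (IH hn') (U_pos hM hq k hk).le
      have h5 : (U M q k ^ n / cc M ^ n) * U M q k / cc M
          = U M q k ^ (n+1) / cc M ^ (n+1) := by
        rw [pow_succ, pow_succ]
        field_simp
      rw [h2, ← h5]
      calc U M q (k*n + k) ≤ (U M q (k*n) * U M q k) / cc M := h3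
        _ ≤ (U M q k ^ n / cc M ^ n) * U M q k / cc M :=
            (div_le_div_iff_of_pos_right hcc).mpr h4

lemma rpow_pow_inv {a : ℝ} (ha : 0 ≤ a) {N : ℕ} (hN : N ≠ 0) :
    (a ^ ((1:ℝ)/N)) ^ N = a := by
  have hNr : ((N:ℝ)) ≠ 0 := by exact_mod_cast hN
  rw [← Real.rpow_natCast (a ^ ((1:ℝ)/N)) N, ← Real.rpow_mul ha]
  rw [one_div, inv_mul_cancel₀ hNr, Real.rpow_one]

lemma pow_rpow_inv {a : ℝ} (ha : 0 ≤ a) {N : ℕ} (hN : N ≠ 0) :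
    (a ^ N) ^ ((1:ℝ)/N) = a := by
  have hNr : ((N:ℝ)) ≠ 0 := by exact_mod_cast hN
  rw [← Real.rpow_natCast a N, ← Real.rpow_mul ha]
  rw [mul_one_div, div_self hNr, Real.rpow_one]

lemma le_rpow_inv {a b : ℝ} (ha : 0 ≤ a) (hb : 0 ≤ b) {N : ℕ} (hN : N ≠ 0)
    (h : a ^ N ≤ b) : a ≤ b ^ ((1:ℝ)/N) := by
  calc a = (a ^ N) ^ ((1:ℝ)/N) := (pow_rpow_inv ha hN).symm
    _ ≤ b ^ ((1:ℝ)/N) := Real.rpow_le_rpow (pow_nonneg ha N) h (by positivity)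

lemma rpow_cross {x y : ℝ} (hx : 0 ≤ x) (hy : 0 ≤ y) {n N : ℕ} (hn : n ≠ 0) (hN : N ≠ 0)
    (h : x ^ N ≤ y ^ n) : x ^ ((1:ℝ)/n) ≤ y ^ ((1:ℝ)/N) := by
  have hnr : ((n:ℝ)) ≠ 0 := by exact_mod_cast hn
  have hNr : ((N:ℝ)) ≠ 0 := by exact_mod_cast hN
  have e1 : x ^ ((1:ℝ)/n) = (x ^ N) ^ ((1:ℝ)/((n:ℝ)*(N:ℝ))) := by
    rw [← Real.rpow_natCast x N, ← Real.rpow_mul hx]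
    congr 1
    field_simp
  have e2 : y ^ ((1:ℝ)/N) = (y ^ n) ^ ((1:ℝ)/((n:ℝ)*(N:ℝ))) := by
    rw [← Real.rpow_natCast y n, ← Real.rpow_mul hy]
    congr 1
    field_simp
  rw [e1, e2]
  exact Real.rpow_le_rpow (pow_nonneg hx _) h (by positivity)

def muF (M q : ℝ) (k : ℕ) : ℝ := (U M q (k+1) / cc M) ^ ((1:ℝ)/((k:ℝ)+1))

def mu (M q : ℝ) : ℝ := ⨅ k : ℕ, muF M q k

lemma mu_spec (hM : 0 < M) {q : ℝ} (hq : q ∈ Set.Ioo (0:ℝ) 1) :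
    0 ≤ mu M q ∧ U M q 1 ≤ mu M q ∧ mu M q ≤ U M q 1 / cc M ∧
      (∀ n, 1 ≤ n → cc M * mu M q ^ n ≤ U M q n ∧ U M q n ≤ mu M q ^ n) := by
  have hcc := cc_pos M hM
  have hcc1 := cc_lt_one M
  have hUpos := U_pos hM hq
  have hmuF0 : ∀ k, 0 ≤ muF M q k := fun k =>
    Real.rpow_nonneg (div_nonneg (hUpos (k+1) (by omega)).le hcc.le) _
  have hBdd : BddBelow (Set.range (muF M q)) := by
    refine ⟨0, ?_⟩
    rintro v ⟨k, rfl⟩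
    exact hmuF0 k
  have hmu_le : ∀ k, mu M q ≤ muF M q k := fun k => ciInf_le hBdd k
  have hmu0 : 0 ≤ mu M q := le_ciInf hmuF0
  have hcast : ∀ k : ℕ, ((k:ℝ)+1) = ((k+1 : ℕ):ℝ) := by intro k; push_cast; ring
  -- U1 ≤ mu
  have hU1mu : U M q 1 ≤ mu M q := by
    apply le_ciInf
    intro k
    rw [muF, hcast k]
    apply le_rpow_inv (hUpos 1 le_rfl).le
      (div_nonneg (hUpos (k+1) (by omega)).le hcc.le) (by omega)
    calc U M q 1 ^ (k+1) ≤ U M q (1*(k+1)) := U_pow_le hM hq 1 (k+1) le_rfl (by omega)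
      _ = U M q (k+1) := by rw [one_mul]
      _ ≤ U M q (k+1) / cc M := by
          rw [le_div_iff₀ hcc]
          nlinarith [hUpos (k+1) (by omega : 1 ≤ k+1)]
  -- U n ≤ mu ^ n
  have hUn_le : ∀ n, 1 ≤ n → U M q n ≤ mu M q ^ n := by
    intro n hn
    have hnne : n ≠ 0 := by omega
    have hkey : ∀ k : ℕ, (U M q n) ^ ((1:ℝ)/n) ≤ muF M q k := by
      intro k
      rw [muF, hcast k]
      apply rpow_cross (hUpos n hn).le
        (div_nonneg (hUpos (k+1) (by omega)).le hcc.le) hnne (by omega)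
      calc U M q n ^ (k+1) ≤ U M q (n*(k+1)) := U_pow_le hM hq n (k+1) hn (by omega)
        _ = U M q ((k+1)*n) := by rw [mul_comm]
        _ ≤ U M q (k+1) ^ n / cc M ^ n := U_le_pow_div hM hq n (k+1) hn (by omega)
        _ = (U M q (k+1) / cc M) ^ n := (div_pow _ _ _).symm
    have hle : (U M q n) ^ ((1:ℝ)/n) ≤ mu M q := le_ciInf hkey
    calc U M q n = ((U M q n) ^ ((1:ℝ)/n)) ^ n := (rpow_pow_inv (hUpos n hn).le hnne).symm
      _ ≤ mu M q ^ n := pow_le_pow_left₀ (Real.rpow_nonneg (hUpos n hn).le _) hle n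
  -- cc * mu^n ≤ U n
  have hccmu : ∀ n, 1 ≤ n → cc M * mu M q ^ n ≤ U M q n := by
    intro n hn
    obtain ⟨j, rfl⟩ : ∃ j, n = j + 1 := ⟨n-1, by omega⟩
    have h1 : mu M q ≤ muF M q j := hmu_le j
    have h2 : mu M q ^ (j+1) ≤ U M q (j+1) / cc M := by
      calc mu M q ^ (j+1) ≤ muF M q j ^ (j+1) := pow_le_pow_left₀ hmu0 h1 _
        _ = U M q (j+1) / cc M := by
            rw [muF, hcast j]
            exact rpow_pow_inv (div_nonneg (hUpos (j+1) (by omega)).le hcc.le) (by omega)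
    calc cc M * mu M q ^ (j+1) ≤ cc M * (U M q (j+1) / cc M) :=
          mul_le_mul_of_nonneg_left h2 hcc.le
      _ = U M q (j+1) := by field_simp
  have hmu_le_U1cc : mu M q ≤ U M q 1 / cc M := by
    have h0 : muF M q 0 = U M q 1 / cc M := by
      rw [muF]
      norm_num
    exact h0 ▸ hmu_le 0
  exact ⟨hmu0, hU1mu, hmu_le_U1cc, fun n hn => ⟨hccmu n hn, hUn_le n hn⟩⟩


lemma U_continuousOn (hM : 0 < M) (n : ℕ) :
    ContinuousOn (fun q => U M q n) (Set.Ioo (0:ℝ) 1) := by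
  intro q0 hq0
  have hb : (0:ℝ) < q0/2 := by linarith [hq0.1]
  have hb1 : q0/2 < 1 := by linarith [hq0.2]
  have hsub : Set.Ioo (q0/2) (1:ℝ) ⊆ Set.Ioo 0 1 := fun z hz => ⟨lt_trans hb hz.1, hz.2⟩
  have hcont : ContinuousOn (fun q => U M q n) (Set.Ioo (q0/2) 1) := by
    have key := continuousOn_tsum (f := fun (r : Fin n → ℕ+) (q : ℝ) => term M q n r)
      (s := Set.Ioo (q0/2) 1) (u := fun r => ∏ i, ((1 - q0/2) ^ ((r i : ℕ)-1)))
      (fun r => by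
        apply Continuous.continuousOn
        apply continuous_finset_prod
        intro i _
        exact (continuous_id'.mul ((continuous_const.sub continuous_id').pow _)).mul
          continuous_const)
      (summable_pi (fun k => pow_nonneg (by linarith) _)
        (summable_gpow (by linarith) (by linarith)) n)
      (fun r q hqs => by
        have hq' : q ∈ Set.Ioo (0:ℝ) 1 := hsub hqs
        rw [Real.norm_eq_abs, abs_of_nonneg (term_nonneg hM hq'.1.le hq'.2.le n r)]
        calc term M q n r ≤ ∏ i : Fin n, (q * (1-q)^((r i : ℕ)-1)) :=
              term_le hM hq'.1.le hq'.2.le n r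
          _ ≤ ∏ i : Fin n, ((1 - q0/2) ^ ((r i : ℕ)-1)) := by
              apply Finset.prod_le_prod
              · intro i _
                exact mul_nonneg hq'.1.le (pow_nonneg (by linarith [hq'.2]) _)
              · intro i _
                have h1 : q * (1-q)^((r i : ℕ)-1) ≤ 1 * (1 - q0/2)^((r i : ℕ)-1) := by
                  apply mul_le_mul hq'.2.le
                    (pow_le_pow_left₀ (by linarith [hq'.2]) (by linarith [hqs.1]) _)
                    (pow_nonneg (by linarith [hq'.2]) _) zero_le_one
                linarith [h1])
    exact key
  exact (hcont.continuousAt (isOpen_Ioo.mem_nhds ⟨by linarith [hq0.1], hq0.2⟩)).continuousWithinAt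

lemma mu_le_B (hM : 0 < M) {q : ℝ} (hq : q ∈ Set.Ioo (0:ℝ) 1) :
    mu M q ≤ 1 / (2 * (Real.exp M - 1)) := by
  have hcc := cc_pos M hM
  have hE : 1 < Real.exp M := by
    have := Real.add_one_le_exp M
    linarith
  have h1q : (0:ℝ) < 1 - q := by linarith [hq.2]
  obtain ⟨_, _, h3, _⟩ := mu_spec hM hq
  refine le_trans h3 ?_
  rw [U_one hM hq]
  -- e^{-M} * (q(-log q)/(2(1-q))) / cc ≤ 1/(2(E-1))
  have hlog : -Real.log q ≤ 1/q - 1 := by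
    have := Real.log_le_sub_one_of_pos (one_div_pos.mpr hq.1)
    rw [one_div, Real.log_inv] at this
    rw [one_div]
    linarith
  have hG : q * (-Real.log q) / (2*(1-q)) ≤ 1/2 := by
    rw [div_le_div_iff₀ (by linarith) two_pos]
    have h2 : q * (-Real.log q) ≤ q * (1/q - 1) :=
      mul_le_mul_of_nonneg_left hlog hq.1.le
    have h3 : q * (1/q - 1) = 1 - q := by
      rw [mul_sub, mul_one, mul_one_div, div_self hq.1.ne']
    nlinarith
  have hEinv : Real.exp (-M) = (Real.exp M)⁻¹ := Real.exp_neg M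
  have hccE : cc M = 1 - (Real.exp M)⁻¹ := by rw [cc, hEinv]
  have hccE2 : cc M = (Real.exp M - 1) / Real.exp M := by
    rw [hccE]
    field_simp
  rw [div_le_iff₀ hcc, hccE2]
  have hGnn : 0 ≤ q * (-Real.log q) / (2*(1-q)) := by
    have h4 : 0 ≤ -Real.log q := by
      have := Real.log_neg hq.1 hq.2; linarith
    exact div_nonneg (mul_nonneg hq.1.le h4) (by linarith)
  have hexp : (0:ℝ) < Real.exp M := Real.exp_pos M
  rw [hEinv]
  rw [show (Real.exp M)⁻¹ * (q * (-Real.log q) / (2*(1-q)))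
      = (q * (-Real.log q) / (2*(1-q))) / Real.exp M by ring]
  rw [div_le_iff₀ hexp] at *
  calc q * (-Real.log q) / (2*(1-q)) ≤ 1/2 := hG
    _ ≤ 1 / (2*(Real.exp M - 1)) * ((Real.exp M - 1)/Real.exp M) * Real.exp M := by
      rw [show 1 / (2*(Real.exp M - 1)) * ((Real.exp M - 1)/Real.exp M) * Real.exp M
        = 1/2 by
          have h1 : Real.exp M ≠ 0 := hexp.ne'
          have h2 : Real.exp M - 1 ≠ 0 := sub_ne_zero.mpr hE.ne'
          field_simp]
  

lemma mu_le_muF (hM : 0 < M) {q : ℝ} (hq : q ∈ Set.Ioo (0:ℝ) 1) (k : ℕ) :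
    mu M q ≤ muF M q k := by
  have hcc := cc_pos M hM
  have hUpos := U_pos hM hq
  have hBdd : BddBelow (Set.range (muF M q)) := by
    refine ⟨0, ?_⟩
    rintro v ⟨j, rfl⟩
    exact Real.rpow_nonneg (div_nonneg (hUpos (j+1) (by omega)).le hcc.le) _
  exact ciInf_le hBdd k

lemma mu_continuousOn (hM : 0 < M) : ContinuousOn (mu M) (Set.Ioo (0:ℝ) 1) := by
  have hcc := cc_pos M hM
  have hcc1 := cc_lt_one M
  have hE : (0:ℝ) < Real.exp M - 1 := by
    have := Real.add_one_le_exp M; linarith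
  set B := 1/(2*(Real.exp M - 1)) with hB
  have hBpos : 0 < B := by rw [hB]; positivity
  have h1 : Filter.Tendsto (fun k : ℕ => -((1:ℝ)/((k:ℝ)+1))) Filter.atTop (nhds 0) := by
    have := tendsto_one_div_add_atTop_nhds_zero_nat (𝕜 := ℝ)
    simpa using this.neg
  have h2 : Filter.Tendsto (fun k : ℕ => cc M ^ (-((1:ℝ)/((k:ℝ)+1)))) Filter.atTop (nhds 1) := by
    have hco : Continuous fun x : ℝ => cc M ^ x := by
      have he : (fun x : ℝ => cc M ^ x) = fun x => Real.exp (Real.log (cc M) * x) := by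
        funext x; rw [Real.rpow_def_of_pos hcc]
      rw [he]
      exact Real.continuous_exp.comp (continuous_const.mul continuous_id)
    have := (hco.tendsto 0).comp h1
    simpa [Real.rpow_zero, Function.comp_def] using this
  have h3 : Filter.Tendsto (fun k : ℕ => B * (cc M ^ (-((1:ℝ)/((k:ℝ)+1))) - 1))
      Filter.atTop (nhds 0) := by
    have := (h2.sub_const 1).const_mul B
    simpa using this
  apply TendstoUniformlyOn.continuousOn
    (F := fun (k:ℕ) (q:ℝ) => muF M q k) (p := Filter.atTop)
  · rw [Metric.tendstoUniformlyOn_iff]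
    intro ε hε
    have hev : ∀ᶠ k : ℕ in Filter.atTop,
        B * (cc M ^ (-((1:ℝ)/((k:ℝ)+1))) - 1) < ε := h3.eventually_lt_const hε
    filter_upwards [hev] with k hk
    intro q hq
    obtain ⟨hmu0, hU1, hmuU1, hbounds⟩ := mu_spec hM hq
    have hUpos := U_pos hM hq
    have hUle := (hbounds (k+1) (by omega)).2
    have e1 : muF M q k ≤ (mu M q ^ (k+1) / cc M) ^ ((1:ℝ)/((k:ℝ)+1)) := by
      rw [muF]
      exact Real.rpow_le_rpow (div_nonneg (hUpos (k+1) (by omega)).le hcc.le)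
        ((div_le_div_iff_of_pos_right hcc).mpr hUle) (by positivity)
    have e2 : (mu M q ^ (k+1) / cc M) ^ ((1:ℝ)/((k:ℝ)+1))
        = mu M q * cc M ^ (-((1:ℝ)/((k:ℝ)+1))) := by
      rw [Real.div_rpow (pow_nonneg hmu0 _) hcc.le]
      rw [show ((1:ℝ)/((k:ℝ)+1)) = ((1:ℝ)/((k+1:ℕ):ℝ)) by push_cast; ring]
      rw [pow_rpow_inv hmu0 (by omega)]
      rw [Real.rpow_neg hcc.le, div_eq_mul_inv]
    have hmuB : mu M q ≤ B := mu_le_B hM hq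
    have hge1 : (1:ℝ) ≤ cc M ^ (-((1:ℝ)/((k:ℝ)+1))) := by
      have hneg : -((1:ℝ)/((k:ℝ)+1)) ≤ 0 := by
        have : (0:ℝ) ≤ 1/((k:ℝ)+1) := by positivity
        linarith
      have := Real.rpow_le_rpow_of_exponent_ge hcc hcc1.le hneg
      simpa [Real.rpow_zero] using this
    have hmuF_ge : mu M q ≤ muF M q k := mu_le_muF hM hq k
    rw [Real.dist_eq, abs_of_nonpos (by linarith : mu M q - muF M q k ≤ 0), neg_sub]
    have t1 : muF M q k ≤ mu M q * cc M ^ (-((1:ℝ)/((k:ℝ)+1))) := e2 ▸ e1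
    have t2 : mu M q * (cc M ^ (-((1:ℝ)/((k:ℝ)+1))) - 1)
        ≤ B * (cc M ^ (-((1:ℝ)/((k:ℝ)+1))) - 1) :=
      mul_le_mul_of_nonneg_right hmuB (by linarith)
    nlinarith
  · exact (Filter.Eventually.of_forall (f := Filter.atTop)
      (p := fun k : ℕ => ContinuousOn (fun q => muF M q k) (Set.Ioo (0:ℝ) 1)) fun k =>
      ((U_continuousOn hM (k+1)).div_const (cc M)).rpow_const
        (fun x _ => Or.inr (by positivity))).frequently

lemma U_one_eq (hM : 0 < M) {q : ℝ} (hq : q ∈ Set.Ioo (0:ℝ) 1) :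
    U M q 1 = q * Real.log (1/q) / (2 * Real.exp M * (1 - q)) := by
  rw [U_one hM hq, one_div, Real.log_inv, Real.exp_neg]
  have h1 : Real.exp M ≠ 0 := (Real.exp_pos M).ne'
  have h2 : (1:ℝ) - q ≠ 0 := (by linarith [hq.2] : (0:ℝ) < 1 - q).ne'
  field_simp
  try ring
  try exact Or.inl trivial

lemma U_one_cc_eq (hM : 0 < M) {q : ℝ} (hq : q ∈ Set.Ioo (0:ℝ) 1) :
    U M q 1 / cc M = q * Real.log (1/q) / (2 * (Real.exp M - 1) * (1 - q)) := by
  rw [U_one hM hq, one_div, Real.log_inv, cc, Real.exp_neg]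
  have hE : 1 < Real.exp M := by have := Real.add_one_le_exp M; linarith
  have h1 : Real.exp M ≠ 0 := (Real.exp_pos M).ne'
  have h2 : (1:ℝ) - q ≠ 0 := (by linarith [hq.2] : (0:ℝ) < 1 - q).ne'
  have h3 : Real.exp M - 1 ≠ 0 := sub_ne_zero.mpr hE.ne'
  have h4 : 1 - (Real.exp M)⁻¹ ≠ 0 := by
    have h5 : (Real.exp M)⁻¹ < 1 := by
      rw [inv_lt_one_iff₀]
      right; exact hE
    have : (0:ℝ) < 1 - (Real.exp M)⁻¹ := by linarith
    exact this.ne'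
  field_simp
  try ring
  try exact Or.inl trivial
  try ring_nf


end URproof

/-- Lemma 3.4. There is a continuous `μ : (0,1) → ℝ` with
`q log(1/q)/(2e^M(1−q)) ≤ μ(q) ≤ q log(1/q)/(2(e^M−1)(1−q))` and
`(1−e^{−M}) μ(q)^n ≤ U_n(q) ≤ μ(q)^n` for all `n`. -/
theorem U_exponential_rate (M : ℝ) (hM : 0 < M) :
    ∃ μ : ℝ → ℝ, ContinuousOn μ (Set.Ioo 0 1) ∧
      ∀ q ∈ Set.Ioo (0 : ℝ) 1,
        (q * Real.log (1 / q) / (2 * Real.exp M * (1 - q)) ≤ μ q ∧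
          μ q ≤ q * Real.log (1 / q) / (2 * (Real.exp M - 1) * (1 - q))) ∧
        ∀ n : ℕ, 1 ≤ n →
          (1 - Real.exp (-M)) * μ q ^ n ≤ U M q n ∧ U M q n ≤ μ q ^ n := by
  refine ⟨URproof.mu M, URproof.mu_continuousOn hM, ?_⟩
  intro q hq
  obtain ⟨hmu0, hU1, hmuU1, hbounds⟩ := URproof.mu_spec hM hq
  refine ⟨⟨?_, ?_⟩, ?_⟩
  · rw [← URproof.U_one_eq hM hq]; exact hU1
  · rw [← URproof.U_one_cc_eq hM hq]; exact hmuU1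
  · intro n hn
    exact ⟨(hbounds n hn).1, (hbounds n hn).2⟩

end
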